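/- If μ, ν > 0 with μ + ν < 1, and a, b are real numbers with a + b > 0, then there is a constant C depending only on μ and ν such that ∑_{k=1}^{∞} 1/((k+b)^{1-μ}(k-a)^{1-ν}) ≤ C/(a+b)^{1-μ-ν}, where the sum is restricted to integers k ≥ 1 with k + b ≥ 1 and k - a ≥ 1. -/

import Mathlib

open Real Finset

lemma bern_aux {q u : ℝ} (hq0 : 0 ≤ q) (hq1 : q ≤ 1) (hu0 : 0 ≤ u) :
    u ^ q ≤ 1 - q + q * u := by
  have h := Real.geom_mean_le_arith_mean2_weighted hq0 (by linarith : (0:ℝ) ≤ 1 - q)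
    hu0 (zero_le_one) (by ring)
  simpa [Real.one_rpow, mul_comm] using h.trans_eq (by ring)

lemma ineq1 {nu : ℝ} (hnu0 : 0 < nu) (hnu1 : nu < 1) {x : ℝ} (hx : 1 ≤ x) :
    nu * x ^ (nu - 1) ≤ x ^ nu - (x - 1) ^ nu := by
  have hx0 : 0 < x := by linarith
  have hu0 : 0 ≤ (x - 1) / x := div_nonneg (by linarith) hx0.le
  have h1 : (x - 1) ^ nu = ((x - 1) / x) ^ nu * x ^ nu := by
    rw [← Real.mul_rpow hu0 hx0.le, div_mul_cancel₀]; exact hx0.ne'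
  have h2 : ((x - 1) / x) ^ nu ≤ 1 - nu + nu * ((x - 1) / x) :=
    bern_aux hnu0.le hnu1.le hu0
  have h3 : x ^ (nu - 1) = x ^ nu / x := by
    rw [Real.rpow_sub hx0, Real.rpow_one]
  have hxnu : 0 ≤ x ^ nu := Real.rpow_nonneg hx0.le nu
  rw [h1, h3]
  have h4 : (1 - nu + nu * ((x - 1) / x)) * x ^ nu = x ^ nu - nu * (x ^ nu / x) := by
    field_simp; ring
  nlinarith [mul_le_mul_of_nonneg_right h2 hxnu]

lemma ineq2 {t : ℝ} (ht0 : 0 < t) (ht1 : t < 1) {x : ℝ} (hx : 0 < x) :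
    t * (x + 1) ^ (-t - 1) ≤ x ^ (-t) - (x + 1) ^ (-t) := by
  have hx1 : 0 < x + 1 := by linarith
  have hv0 : 0 < x / (x + 1) := by positivity
  have hv1 : x / (x + 1) < 1 := by rw [div_lt_one hx1]; linarith
  set v : ℝ := x / (x + 1) with hv
  have hb : v ^ t ≤ 1 - t + t * v := bern_aux ht0.le ht1.le hv0.le
  have hvt : 0 < v ^ t := Real.rpow_pos_of_pos hv0 t
  have hpos : 0 < 1 + t - t * v := by nlinarith
  have h1le : (1 + t - t * v) * v ^ t ≤ 1 := by nlinarith [sq_nonneg (t - t * v)]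
  have key : 1 + t - t * v ≤ v ^ (-t) := by
    rw [Real.rpow_neg hv0.le]
    calc 1 + t - t * v = (1 + t - t * v) * v ^ t / v ^ t := by field_simp
      _ ≤ 1 / v ^ t := by gcongr
      _ = (v ^ t)⁻¹ := one_div _
  have hxv : v * (x + 1) = x := by rw [hv]; field_simp
  have h1 : x ^ (-t) = v ^ (-t) * (x + 1) ^ (-t) := by
    rw [← Real.mul_rpow hv0.le hx1.le, hxv]
  have h2 : (x + 1) ^ (-t - 1) = (x + 1) ^ (-t) / (x + 1) := by
    rw [Real.rpow_sub hx1, Real.rpow_one]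
  have h3 : 0 ≤ (x + 1) ^ (-t) := Real.rpow_nonneg hx1.le _
  have hmain := mul_le_mul_of_nonneg_right key h3
  have hexp : (1 + t - t * v) * (x + 1) ^ (-t)
      = (x + 1) ^ (-t) + t * ((x + 1) ^ (-t) / (x + 1)) := by
    have hveq : t - t * v = t / (x + 1) := by rw [hv]; field_simp; ring
    have : (1 + t - t * v) * (x + 1) ^ (-t)
        = (x + 1) ^ (-t) + (t - t * v) * (x + 1) ^ (-t) := by ring
    rw [this, hveq]; ring
  rw [hexp] at hmain
  rw [h1, h2]
  linarith

lemma lemA {nu : ℝ} (hnu0 : 0 < nu) (hnu1 : nu < 1) (P : ℕ) :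
    ∑ j ∈ range P, ((j : ℝ) + 1) ^ (nu - 1) ≤ (1 + 1 / nu) * (P : ℝ) ^ nu := by
  induction P with
  | zero => simp [Real.zero_rpow hnu0.ne']
  | succ P ih =>
    rw [Finset.sum_range_succ]
    have hP : (0:ℝ) ≤ (P:ℝ) := Nat.cast_nonneg P
    have hx : (1 : ℝ) ≤ (P : ℝ) + 1 := by linarith
    have h1 := ineq1 hnu0 hnu1 hx
    have h2 : ((P : ℝ) + 1) - 1 = (P : ℝ) := by ring
    rw [h2] at h1
    have hnn : 0 ≤ ((P:ℝ) + 1) ^ (nu - 1) := Real.rpow_nonneg (by positivity) _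
    have hcast : ((P + 1 : ℕ) : ℝ) = (P : ℝ) + 1 := by norm_cast
    rw [hcast]
    have hc : (0:ℝ) < 1 + 1/nu := by positivity
    have h7 := mul_le_mul_of_nonneg_left h1 hc.le
    have h8 : (1 + 1/nu) * (nu * (((P:ℝ)+1) ^ (nu-1))) = (nu+1) * (((P:ℝ)+1) ^ (nu-1)) := by
      field_simp
    rw [h8, mul_sub] at h7
    have h9 : ((P:ℝ)+1) ^ (nu-1) ≤ (nu+1) * (((P:ℝ)+1) ^ (nu-1)) := by nlinarith [hnn]
    linarith

lemma lemB {t : ℝ} (ht0 : 0 < t) (ht1 : t < 1) {M : ℝ} (hM : 1 ≤ M) (N : ℕ) :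
    ∑ j ∈ range N, (M + (j : ℝ)) ^ (-t - 1) ≤ M ^ (-t - 1) + M ^ (-t) / t := by
  have hM0 : 0 < M := by linarith
  have key : ∀ N : ℕ, ∑ j ∈ range (N + 1), (M + (j : ℝ)) ^ (-t - 1)
      ≤ M ^ (-t - 1) + (M ^ (-t) - (M + (N : ℝ)) ^ (-t)) / t := by
    intro N
    induction N with
    | zero => simp
    | succ N ih =>
      rw [Finset.sum_range_succ]
      have hx : 0 < M + (N : ℝ) := by positivity
      have h1 := ineq2 ht0 ht1 hx
      have hcast : ((N + 1 : ℕ) : ℝ) = (N : ℝ) + 1 := by norm_cast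
      rw [hcast]
      have h2 : (M + ((N:ℝ) + 1)) = (M + (N:ℝ)) + 1 := by ring
      rw [h2]
      have h3 : ((M + (N:ℝ)) + 1) ^ (-t - 1)
          ≤ ((M + (N:ℝ)) ^ (-t) - ((M + (N:ℝ)) + 1) ^ (-t)) / t := by
        rw [le_div_iff₀ ht0]; nlinarith [h1]
      have h4 := add_le_add ih h3
      refine h4.trans (le_of_eq ?_)
      rw [add_assoc, ← add_div]
      ring_nf
  cases N with
  | zero =>
    simp only [Finset.range_zero, Finset.sum_empty]
    positivity
  | succ N =>
    refine (key N).trans ?_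
    have h5 : 0 ≤ (M + (N:ℝ)) ^ (-t) := Real.rpow_nonneg (by positivity) _
    have h6 : (M ^ (-t) - (M + (N : ℝ)) ^ (-t)) / t ≤ M ^ (-t) / t := by
      gcongr
      linarith
    linarith

theorem discrete_convolution_tail_bound (mu nu : ℝ) (hmu : 0 < mu) (hnu : 0 < nu)
    (hsum : mu + nu < 1) :
    ∃ C : ℝ, 0 < C ∧ ∀ a b : ℝ, 0 < a + b →
      (∑' k : ℕ, if 1 ≤ k ∧ 1 ≤ (k : ℝ) + b ∧ 1 ≤ (k : ℝ) - a then
          ((k : ℝ) + b) ^ (mu - 1) * ((k : ℝ) - a) ^ (nu - 1) else 0)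
        ≤ C / (a + b) ^ (1 - mu - nu) := by
  have h1σ : 0 < 1 - (mu + nu) := by linarith
  set C : ℝ := (1 + 1/nu) + 2 ^ (2 - (mu+nu)) * (1 + 1/(1-(mu+nu))) with hCdef
  have htwo : (0:ℝ) < 2 ^ (2 - (mu+nu)) := Real.rpow_pos_of_pos two_pos _
  have hC2 : (0:ℝ) < 1 + 1/(1-(mu+nu)) := by positivity
  have hCpos : 0 < C := by rw [hCdef]; positivity
  refine ⟨C, hCpos, ?_⟩
  intro a b hs
  set k₀ : ℕ := max 1 ⌈a+1⌉₊ with hk₀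
  have hak : a + 1 ≤ (k₀ : ℝ) := by
    have h := Nat.le_ceil (a+1)
    have h2 : (⌈a+1⌉₊ : ℝ) ≤ (k₀ : ℝ) := by
      exact_mod_cast Nat.cast_le.mpr (le_max_right 1 ⌈a+1⌉₊)
    linarith
  have hcond : ∀ k : ℕ, (1 ≤ k ∧ 1 ≤ (k:ℝ)+b ∧ 1 ≤ (k:ℝ)-a) ↔ k₀ ≤ k := by
    intro k
    constructor
    · rintro ⟨h1, _, h3⟩
      refine max_le h1 ?_
      rw [Nat.ceil_le]; push_cast; linarith
    · intro hk
      have hk1 : 1 ≤ k := le_trans (le_max_left _ _) hk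
      have hka : a + 1 ≤ (k:ℝ) := by
        have h1 : ⌈a+1⌉₊ ≤ k := le_trans (le_max_right _ _) hk
        have := Nat.ceil_le.mp h1
        exact_mod_cast this
      exact ⟨hk1, by linarith, by linarith⟩
  set M : ℝ := max (a+b) 1 with hMdef
  have hM1 : (1:ℝ) ≤ M := le_max_right _ _
  have hMs : a + b ≤ M := le_max_left _ _
  have hM0 : (0:ℝ) < M := by linarith
  set G : ℕ → ℝ := fun j => if (j:ℝ) + 1 ≤ a + b then (a+b) ^ (mu-1) * ((j:ℝ)+1) ^ (nu-1) else 0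
    with hG
  set H : ℕ → ℝ := fun j => 2 ^ (2 - (mu+nu)) * (M + (j:ℝ)) ^ ((mu+nu) - 2) with hH
  have hGnn : ∀ j : ℕ, 0 ≤ G j := by
    intro j; rw [hG]; dsimp only; split
    · have hj : (0:ℝ) ≤ (j:ℝ) := Nat.cast_nonneg j
      apply mul_nonneg (Real.rpow_nonneg hs.le _) (Real.rpow_nonneg (by linarith) _)
    · exact le_rfl
  have hHnn : ∀ j : ℕ, 0 ≤ H j := by
    intro j; rw [hH]; dsimp only
    have hj : (0:ℝ) ≤ (j:ℝ) := Nat.cast_nonneg j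
    exact mul_nonneg htwo.le (Real.rpow_nonneg (by linarith) _)
  -- pointwise bound
  have hpt : ∀ i : ℕ,
      ((k₀:ℝ) + (i:ℝ) + b) ^ (mu-1) * ((k₀:ℝ) + (i:ℝ) - a) ^ (nu-1) ≤ G i + H i := by
    intro i
    have hi : (0:ℝ) ≤ (i:ℝ) := Nat.cast_nonneg i
    set t : ℝ := (k₀:ℝ) + (i:ℝ) - a with htdef
    have hti : (i:ℝ) + 1 ≤ t := by rw [htdef]; linarith
    have ht0 : 0 < t := by linarith
    have hkb : (k₀:ℝ) + (i:ℝ) + b = t + (a+b) := by rw [htdef]; ring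
    rw [hkb]
    by_cases hcase : t ≤ a + b
    · have hjs : (i:ℝ) + 1 ≤ a + b := le_trans hti hcase
      have hGeq : G i = (a+b)^(mu-1) * ((i:ℝ)+1)^(nu-1) := by
        rw [hG]; dsimp only; rw [if_pos hjs]
      have h1 : (t + (a+b)) ^ (mu-1) ≤ (a+b) ^ (mu-1) :=
        Real.rpow_le_rpow_of_nonpos hs (by linarith) (by linarith)
      have h2 : t ^ (nu-1) ≤ ((i:ℝ)+1) ^ (nu-1) :=
        Real.rpow_le_rpow_of_nonpos (by linarith) hti (by linarith)
      have h3 := mul_le_mul h1 h2 (Real.rpow_nonneg ht0.le _) (Real.rpow_nonneg hs.le _)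
      have h4 : (t + (a+b)) ^ (mu-1) * t ^ (nu-1) ≤ G i := by rw [hGeq]; exact h3
      linarith [hHnn i]
    · push_neg at hcase
      have hMt : M ≤ t := max_le hcase.le (by linarith)
      have h2t : (M + (i:ℝ)) / 2 ≤ t := by linarith
      have hMi0 : (0:ℝ) < (M + (i:ℝ)) / 2 := by linarith
      have hstep1 : (t + (a+b))^(mu-1) ≤ t^(mu-1) :=
        Real.rpow_le_rpow_of_nonpos ht0 (by linarith) (by linarith)
      have hstep2 : (t+(a+b))^(mu-1) * t^(nu-1) ≤ t^(mu-1) * t^(nu-1) :=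
        mul_le_mul_of_nonneg_right hstep1 (Real.rpow_nonneg ht0.le _)
      have hmul : t^(mu-1) * t^(nu-1) = t^((mu+nu)-2) := by
        rw [← Real.rpow_add ht0]; ring_nf
      have hstep3 : t^((mu+nu)-2) ≤ ((M + (i:ℝ))/2)^((mu+nu)-2) :=
        Real.rpow_le_rpow_of_nonpos hMi0 h2t (by linarith)
      have hdiv : ((M + (i:ℝ))/2)^((mu+nu)-2)
          = 2 ^ (2-(mu+nu)) * (M + (i:ℝ))^((mu+nu)-2) := by
        rw [Real.div_rpow (by linarith) (by norm_num : (0:ℝ) ≤ 2), div_eq_mul_inv,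
          ← Real.rpow_neg (by norm_num : (0:ℝ) ≤ 2)]
        have : -((mu+nu)-2) = 2-(mu+nu) := by ring
        rw [this, mul_comm]
      have h5 : (t+(a+b))^(mu-1) * t^(nu-1) ≤ H i := by
        rw [hH]; dsimp only; rw [← hdiv]
        calc (t+(a+b))^(mu-1) * t^(nu-1) ≤ t^(mu-1) * t^(nu-1) := hstep2
          _ = t^((mu+nu)-2) := hmul
          _ ≤ _ := hstep3
      linarith [hGnn i]
  -- G sum bound
  have hGsum : ∀ P : ℕ, ∑ j ∈ range P, G j ≤ (1 + 1/nu) * (a+b)^((mu+nu)-1) := by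
    intro P
    have e1 : ∑ j ∈ range P, G j
        = ∑ j ∈ (range P).filter (fun j : ℕ => (j:ℝ) + 1 ≤ a + b),
            (a+b) ^ (mu-1) * ((j:ℝ)+1) ^ (nu-1) := by
      rw [Finset.sum_filter]
    have hsubset : (range P).filter (fun j : ℕ => (j:ℝ) + 1 ≤ a + b) ⊆ range ⌊a+b⌋₊ := by
      intro j hj
      rw [Finset.mem_filter] at hj
      have h1 : (((j+1 : ℕ)):ℝ) ≤ a + b := by push_cast; linarith [hj.2]
      have := Nat.le_floor h1
      rw [Finset.mem_range]; omega
    have e2 : ∑ j ∈ (range P).filter (fun j : ℕ => (j:ℝ) + 1 ≤ a + b),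
          (a+b) ^ (mu-1) * ((j:ℝ)+1) ^ (nu-1)
        ≤ ∑ j ∈ range ⌊a+b⌋₊, (a+b) ^ (mu-1) * ((j:ℝ)+1) ^ (nu-1) := by
      apply Finset.sum_le_sum_of_subset_of_nonneg hsubset
      intro j _ _
      have hj : (0:ℝ) ≤ (j:ℝ) := Nat.cast_nonneg j
      exact mul_nonneg (Real.rpow_nonneg hs.le _) (Real.rpow_nonneg (by linarith) _)
    have e3 : ∑ j ∈ range ⌊a+b⌋₊, (a+b) ^ (mu-1) * ((j:ℝ)+1) ^ (nu-1)
        = (a+b) ^ (mu-1) * ∑ j ∈ range ⌊a+b⌋₊, ((j:ℝ)+1) ^ (nu-1) := by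
      rw [Finset.mul_sum]
    have e4 : ∑ j ∈ range ⌊a+b⌋₊, ((j:ℝ)+1) ^ (nu-1) ≤ (1 + 1/nu) * ((⌊a+b⌋₊:ℝ)) ^ nu :=
      lemA hnu (by linarith) _
    have e5 : ((⌊a+b⌋₊:ℝ)) ^ nu ≤ (a+b) ^ nu :=
      Real.rpow_le_rpow (Nat.cast_nonneg _) (Nat.floor_le hs.le) hnu.le
    have e6 : (a+b) ^ (mu-1) * ((a+b) ^ nu) = (a+b)^((mu+nu)-1) := by
      rw [← Real.rpow_add hs]; ring_nf
    have hc : (0:ℝ) < 1 + 1/nu := by positivity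
    calc ∑ j ∈ range P, G j
        ≤ (a+b) ^ (mu-1) * ∑ j ∈ range ⌊a+b⌋₊, ((j:ℝ)+1) ^ (nu-1) := by
          rw [e1]; rw [← e3]; exact e2
      _ ≤ (a+b) ^ (mu-1) * ((1 + 1/nu) * ((⌊a+b⌋₊:ℝ)) ^ nu) := by
          apply mul_le_mul_of_nonneg_left e4 (Real.rpow_nonneg hs.le _)
      _ ≤ (a+b) ^ (mu-1) * ((1 + 1/nu) * ((a+b)) ^ nu) := by
          apply mul_le_mul_of_nonneg_left ?_ (Real.rpow_nonneg hs.le _)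
          exact mul_le_mul_of_nonneg_left e5 hc.le
      _ = (1 + 1/nu) * (a+b)^((mu+nu)-1) := by rw [← e6]; ring
  -- H sum bound
  have hHsum : ∀ P : ℕ, ∑ j ∈ range P, H j
      ≤ 2 ^ (2-(mu+nu)) * (1 + 1/(1-(mu+nu))) * (a+b)^((mu+nu)-1) := by
    intro P
    have hexp : ∀ j : ℕ, (M + (j:ℝ)) ^ ((mu+nu) - 2)
        = (M + (j:ℝ)) ^ (-(1-(mu+nu)) - 1) := by
      intro j; congr 1; ring
    have e1 : ∑ j ∈ range P, H j
        = 2 ^ (2-(mu+nu)) * ∑ j ∈ range P, (M + (j:ℝ)) ^ (-(1-(mu+nu)) - 1) := by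
      rw [hH]; dsimp only; rw [← Finset.mul_sum]
      congr 1; exact Finset.sum_congr rfl (fun j _ => hexp j)
    have hB := lemB h1σ (by linarith) hM1 P
    have h7 : M ^ (-(1-(mu+nu)) - 1) ≤ M ^ (-(1-(mu+nu))) :=
      Real.rpow_le_rpow_of_exponent_le hM1 (by linarith)
    have h8 : M ^ (-(1-(mu+nu))) ≤ (a+b) ^ (-(1-(mu+nu))) :=
      Real.rpow_le_rpow_of_nonpos hs hMs (by linarith)
    have h9 : (a+b) ^ (-(1-(mu+nu))) = (a+b) ^ ((mu+nu)-1) := by congr 1; ring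
    have hMnn : 0 ≤ M ^ (-(1-(mu+nu))) := Real.rpow_nonneg hM0.le _
    have h10 : ∑ j ∈ range P, (M + (j:ℝ)) ^ (-(1-(mu+nu)) - 1)
        ≤ (1 + 1/(1-(mu+nu))) * (a+b) ^ ((mu+nu)-1) := by
      refine hB.trans ?_
      rw [← h9]
      have : M ^ (-(1-(mu+nu)) - 1) + M ^ (-(1-(mu+nu))) / (1-(mu+nu))
          ≤ M ^ (-(1-(mu+nu))) + M ^ (-(1-(mu+nu))) / (1-(mu+nu)) := by linarith
      refine this.trans ?_
      have h11 : M ^ (-(1-(mu+nu))) + M ^ (-(1-(mu+nu))) / (1-(mu+nu))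
          = (1 + 1/(1-(mu+nu))) * M ^ (-(1-(mu+nu))) := by field_simp
      rw [h11]
      exact mul_le_mul_of_nonneg_left h8 hC2.le
    calc ∑ j ∈ range P, H j
        = 2 ^ (2-(mu+nu)) * ∑ j ∈ range P, (M + (j:ℝ)) ^ (-(1-(mu+nu)) - 1) := e1
      _ ≤ 2 ^ (2-(mu+nu)) * ((1 + 1/(1-(mu+nu))) * (a+b) ^ ((mu+nu)-1)) :=
          mul_le_mul_of_nonneg_left h10 htwo.le
      _ = 2 ^ (2-(mu+nu)) * (1 + 1/(1-(mu+nu))) * (a+b)^((mu+nu)-1) := by ring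
  -- partial sums of the main series
  have hmain : ∀ n : ℕ, ∑ k ∈ range n,
      (if 1 ≤ k ∧ 1 ≤ (k : ℝ) + b ∧ 1 ≤ (k : ℝ) - a then
          ((k : ℝ) + b) ^ (mu - 1) * ((k : ℝ) - a) ^ (nu - 1) else 0)
      ≤ C * (a+b)^((mu+nu)-1) := by
    intro n
    have hrhsnn : 0 ≤ C * (a+b)^((mu+nu)-1) :=
      mul_nonneg hCpos.le (Real.rpow_nonneg hs.le _)
    have hite : ∀ k : ℕ, (if 1 ≤ k ∧ 1 ≤ (k : ℝ) + b ∧ 1 ≤ (k : ℝ) - a then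
          ((k : ℝ) + b) ^ (mu - 1) * ((k : ℝ) - a) ^ (nu - 1) else 0)
        = (if k₀ ≤ k then ((k : ℝ) + b) ^ (mu - 1) * ((k : ℝ) - a) ^ (nu - 1) else 0) := by
      intro k; exact if_congr (hcond k) rfl rfl
    rw [Finset.sum_congr rfl (fun k _ => hite k)]
    by_cases hn : n ≤ k₀
    · have : ∀ k ∈ range n, (if k₀ ≤ k then
          ((k : ℝ) + b) ^ (mu - 1) * ((k : ℝ) - a) ^ (nu - 1) else 0) = 0 := by
        intro k hk
        rw [Finset.mem_range] at hk
        rw [if_neg]; omega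
      rw [Finset.sum_eq_zero this]
      exact hrhsnn
    · push_neg at hn
      rw [Finset.range_eq_Ico, ← Finset.sum_Ico_consecutive _ (Nat.zero_le k₀) hn.le]
      have hzero : ∑ k ∈ Finset.Ico 0 k₀, (if k₀ ≤ k then
          ((k : ℝ) + b) ^ (mu - 1) * ((k : ℝ) - a) ^ (nu - 1) else 0) = 0 := by
        apply Finset.sum_eq_zero
        intro k hk
        rw [Finset.mem_Ico] at hk
        rw [if_neg]; omega
      rw [hzero, zero_add, Finset.sum_Ico_eq_sum_range]
      have hterm : ∀ i ∈ range (n - k₀), (if k₀ ≤ k₀ + i then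
          (((k₀ + i : ℕ) : ℝ) + b) ^ (mu - 1) * (((k₀ + i : ℕ) : ℝ) - a) ^ (nu - 1) else 0)
          ≤ G i + H i := by
        intro i _
        rw [if_pos (Nat.le_add_right _ _)]
        have hcast : ((k₀ + i : ℕ) : ℝ) = (k₀:ℝ) + (i:ℝ) := by push_cast; ring
        rw [hcast]
        exact hpt i
      calc ∑ i ∈ range (n - k₀), (if k₀ ≤ k₀ + i then
            (((k₀ + i : ℕ) : ℝ) + b) ^ (mu - 1) * (((k₀ + i : ℕ) : ℝ) - a) ^ (nu - 1) else 0)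
          ≤ ∑ i ∈ range (n - k₀), (G i + H i) := Finset.sum_le_sum hterm
        _ = ∑ i ∈ range (n - k₀), G i + ∑ i ∈ range (n - k₀), H i := Finset.sum_add_distrib
        _ ≤ (1 + 1/nu) * (a+b)^((mu+nu)-1)
            + 2 ^ (2-(mu+nu)) * (1 + 1/(1-(mu+nu))) * (a+b)^((mu+nu)-1) :=
            add_le_add (hGsum _) (hHsum _)
        _ = C * (a+b)^((mu+nu)-1) := by rw [hCdef]; ring
  -- conclude
  have hnn : ∀ k : ℕ, 0 ≤ (if 1 ≤ k ∧ 1 ≤ (k : ℝ) + b ∧ 1 ≤ (k : ℝ) - a then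
      ((k : ℝ) + b) ^ (mu - 1) * ((k : ℝ) - a) ^ (nu - 1) else 0) := by
    intro k
    split
    · next h =>
      obtain ⟨_, h2, h3⟩ := h
      exact mul_nonneg (Real.rpow_nonneg (by linarith) _) (Real.rpow_nonneg (by linarith) _)
    · exact le_refl 0
  have := Real.tsum_le_of_sum_range_le hnn hmain
  refine this.trans (le_of_eq ?_)
  rw [div_eq_mul_inv, ← Real.rpow_neg hs.le]
  congr 1
  ring
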